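/- Let R be a regular ring of prime characteristic p > 0, f_1,…,f_c a regular sequence, f = ∏f_i. For each q = p^e, the Fedder-action structure map R/𝐟^{[q+1]} → R/𝐟^{[qp+1]} at the level of the directed system defining H^c_𝐟(R)_fed, given by r ↦ f^{p−1}r^p (composed with the identification), has kernel after Frobenius base change described by: the kernel of the induced surjection R/𝐟^{[q+p]} → R/𝐟^{[q+1]} is 𝐟^{[q+1]}/𝐟^{[q+p]}, and 𝐟^{[q+1]}/𝐟^{[q+p]} = (𝐟^{[q+p]} : f^{p−1})/𝐟^{[q+p]}; consequently the kernel of the structure morphism F_R(H^c_𝐟(R)_fed) → H^c_𝐟(R)_fed equals (0 :_{H^c_𝐟(R)} f^{p−1}). -/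

import Mathlib

open RingTheory.Sequence
open scoped TensorProduct

section Aux

variable {S : Type} [CommRing S]

/-- `x` is a nonzerodivisor modulo `I`. -/
def NZD (I : Ideal S) (x : S) : Prop := ∀ r : S, x * r ∈ I → r ∈ I

/-- Elementwise weak regularity of a list relative to a base ideal. -/
def ElemReg (I : Ideal S) : List S → Prop
  | [] => True
  | x :: t => NZD I x ∧ ElemReg (I ⊔ Ideal.span {x}) t

lemma isSMulRegular_quotient_iff (N : Ideal S) (x : S) :
    IsSMulRegular (S ⧸ N) x ↔ NZD N x := by
  constructor
  · intro h r hr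
    have h0 : x • (Ideal.Quotient.mk N r) = x • (0 : S ⧸ N) := by
      rw [smul_zero, Algebra.smul_def, Ideal.Quotient.algebraMap_eq, ← map_mul,
        Ideal.Quotient.eq_zero_iff_mem]
      exact hr
    have := h h0
    rwa [Ideal.Quotient.eq_zero_iff_mem] at this
  · intro h a b hab
    obtain ⟨u, rfl⟩ := Ideal.Quotient.mk_surjective a
    obtain ⟨v, rfl⟩ := Ideal.Quotient.mk_surjective b
    simp only [] at hab
    rw [Algebra.smul_def, Algebra.smul_def, Ideal.Quotient.algebraMap_eq, ← map_mul, ← map_mul,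
      Ideal.Quotient.mk_eq_mk_iff_sub_mem] at hab
    rw [Ideal.Quotient.mk_eq_mk_iff_sub_mem]
    exact h _ (by rwa [mul_sub])

lemma smul_top_eq (J : Ideal S) : J • (⊤ : Submodule S S) = J := by
  rw [Ideal.smul_eq_mul, Ideal.mul_top]

lemma map_mkQ_sup (K J : Ideal S) :
    Submodule.map K.mkQ (K ⊔ J) = J • (⊤ : Submodule S (S ⧸ K)) := by
  have h1 : Submodule.map K.mkQ K = ⊥ := by
    rw [eq_bot_iff]
    rintro _ ⟨y, hy, rfl⟩
    rw [Submodule.mem_bot, Submodule.mkQ_apply, Submodule.Quotient.mk_eq_zero]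
    exact hy
  calc Submodule.map K.mkQ (K ⊔ J) = Submodule.map K.mkQ K ⊔ Submodule.map K.mkQ J := by
        rw [Submodule.map_sup]
    _ = Submodule.map K.mkQ J := by rw [h1, bot_sup_eq]
    _ = Submodule.map K.mkQ (J • ⊤) := by rw [smul_top_eq]
    _ = J • Submodule.map K.mkQ ⊤ := by rw [Submodule.map_smul'']
    _ = J • ⊤ := by rw [Submodule.map_top, Submodule.range_mkQ]

/-- `(S/K)/(J•⊤) ≃ S/(K ⊔ J)`. -/
noncomputable def quotSupEquiv (K J : Ideal S) :
    ((S ⧸ K) ⧸ (J • (⊤ : Submodule S (S ⧸ K)))) ≃ₗ[S] S ⧸ (K ⊔ J) :=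
  (Submodule.quotEquivOfEq _ _ (map_mkQ_sup K J).symm).trans
    (Submodule.quotientQuotientEquivQuotient K (K ⊔ J) le_sup_left)

lemma bridge : ∀ (l : List S) (I : Ideal S), IsWeaklyRegular (S ⧸ I) l ↔ ElemReg I l
  | [], I => by
    simp only [ElemReg, iff_true]
    exact IsWeaklyRegular.nil S (S ⧸ I)
  | x :: t, I => by
    have e : QuotSMulTop x (S ⧸ I) ≃ₗ[S] S ⧸ (I ⊔ Ideal.span {x}) :=
      (Submodule.quotEquivOfEq _ _ (Submodule.ideal_span_singleton_smul x ⊤).symm).trans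
        (quotSupEquiv I (Ideal.span {x}))
    rw [isWeaklyRegular_cons_iff, isSMulRegular_quotient_iff,
      e.isWeaklyRegular_congr t, bridge t (I ⊔ Ideal.span {x})]
    rfl


lemma NZD.pow {I : Ideal S} {x : S} (h : NZD I x) : ∀ k, NZD I (x ^ k)
  | 0 => fun r hr => by rwa [pow_zero, one_mul] at hr
  | k + 1 => fun r hr => by
    rw [pow_succ, mul_assoc] at hr
    exact h r (NZD.pow h k _ hr)

lemma NZD.of_pow {I : Ideal S} {x : S} {k : ℕ} (hk : 1 ≤ k) (h : NZD I (x ^ k)) : NZD I x := by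
  intro r hr
  apply h r
  have : x ^ k * r = x ^ (k - 1) * (x * r) := by
    rw [← mul_assoc, ← pow_succ]
    congr 2
    omega
  rw [this]
  exact Ideal.mul_mem_left _ _ hr

lemma ElemReg.pow_last : ∀ (t : List S) (I : Ideal S) (x : S) (k : ℕ),
    ElemReg I (t ++ [x]) → ElemReg I (t ++ [x ^ k])
  | [], I, x, k, h => ⟨h.1.pow k, trivial⟩
  | y :: t, I, x, k, h => ⟨h.1, ElemReg.pow_last t _ x k h.2⟩

/-- the last element of a regular list is a NZD mod the ideal generated by the rest. -/
lemma ElemReg.nzd_last : ∀ (t : List S) (I : Ideal S) (x : S),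
    ElemReg I (t ++ [x]) → NZD (I ⊔ Ideal.ofList t) x
  | [], I, x, h => by simpa using h.1
  | y :: t, I, x, h => by
    have := ElemReg.nzd_last t (I ⊔ Ideal.span {y}) x h.2
    rwa [Ideal.ofList_cons, ← sup_assoc]

section Local

variable [IsLocalRing S] [IsNoetherianRing S]

lemma ElemReg.perm {I : Ideal S} {l l' : List S} (h : ElemReg I l) (hp : l.Perm l')
    (hm : ∀ x ∈ l, x ∈ IsLocalRing.maximalIdeal S) : ElemReg I l' := by
  rw [← bridge] at h ⊢
  exact IsLocalRing.isWeaklyRegular_of_perm_of_subset_maximalIdeal h hp hm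

lemma ElemReg.map_pow : ∀ (l : List S) (I : Ideal S), ElemReg I l →
    (∀ x ∈ l, x ∈ IsLocalRing.maximalIdeal S) → ∀ {A : ℕ}, 1 ≤ A →
    ElemReg I (l.map (· ^ A))
  | [], I, _, _, _, _ => trivial
  | x :: t, I, h, hm, A, hA => by
    have hxm := hm x List.mem_cons_self
    have htm : ∀ y ∈ t, y ∈ IsLocalRing.maximalIdeal S :=
      fun y hy => hm y (List.mem_cons_of_mem x hy)
    have h1 : ElemReg I (t ++ [x]) :=
      h.perm (List.perm_append_singleton x t).symm hm
    have h2 : ElemReg I (t ++ [x ^ A]) := h1.pow_last t I x A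
    have h3 : ElemReg I (x ^ A :: t) := by
      refine h2.perm (List.perm_append_singleton _ t) ?_
      intro y hy
      rcases List.mem_append.mp hy with hy | hy
      · exact htm y hy
      · rw [List.mem_singleton.mp hy]
        exact Ideal.pow_mem_of_mem _ hxm A hA
    exact ⟨h3.1, ElemReg.map_pow t _ h3.2 htm hA⟩

end Local

lemma colon_step {J : Ideal S} {x : S} (hx : NZD J x) {a : ℕ} (ha : 1 ≤ a) {u : S}
    (hu : x * u ∈ J ⊔ Ideal.span {x ^ a}) : u ∈ J ⊔ Ideal.span {x ^ (a - 1)} := by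
  obtain ⟨j, hj, z, hz, hsum⟩ := Submodule.mem_sup.mp hu
  obtain ⟨v, rfl⟩ := Ideal.mem_span_singleton'.mp hz
  have key : x * (u - v * x ^ (a - 1)) ∈ J := by
    have hxa : x ^ a = x ^ (a - 1) * x := by
      rw [← pow_succ]
      congr 1
      omega
    have : x * (u - v * x ^ (a - 1)) = j := by
      have := hsum
      rw [hxa] at this
      linear_combination -this
    rw [this]; exact hj
  have := hx _ key
  have : u = (u - v * x ^ (a - 1)) + v * x ^ (a - 1) := by ring
  rw [this]
  exact Submodule.add_mem_sup ‹u - v * x ^ (a - 1) ∈ J›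
    (Ideal.mem_span_singleton'.mpr ⟨v, rfl⟩)

lemma colon_pow {J : Ideal S} {x : S} (hx : NZD J x) :
    ∀ (b : ℕ) {a : ℕ}, b ≤ a → ∀ {s : S}, x ^ b * s ∈ J ⊔ Ideal.span {x ^ a} →
      s ∈ J ⊔ Ideal.span {x ^ (a - b)}
  | 0, a, _, s, hs => by rw [Nat.sub_zero]; rwa [pow_zero, one_mul] at hs
  | b + 1, a, hba, s, hs => by
    have h1 : x * (x ^ b * s) ∈ J ⊔ Ideal.span {x ^ a} := by
      rw [← mul_assoc, ← pow_succ']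
      exact hs
    have h2 := colon_step hx (by omega : 1 ≤ a) h1
    have h3 := colon_pow hx b (by omega : b ≤ a - 1) h2
    rwa [show a - 1 - b = a - (b + 1) by omega] at h3


section Local2

variable [IsLocalRing S] [IsNoetherianRing S]

lemma main_local : ∀ (l : List S) (I : Ideal S), ElemReg I l →
    (∀ x ∈ l, x ∈ IsLocalRing.maximalIdeal S) → ∀ {A B : ℕ}, B < A → ∀ {r : S},
    r * (l.map (· ^ B)).prod ∈ I ⊔ Ideal.ofList (l.map (· ^ A)) →
    r ∈ I ⊔ Ideal.ofList (l.map (· ^ (A - B)))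
  | [], I, _, _, A, B, _, r, hr => by simpa using hr
  | x :: t, I, h, hm, A, B, hBA, r, hr => by
    have hxm := hm x List.mem_cons_self
    have htm : ∀ y ∈ t, y ∈ IsLocalRing.maximalIdeal S :=
      fun y hy => hm y (List.mem_cons_of_mem x hy)
    set J := I ⊔ Ideal.ofList (t.map (· ^ A)) with hJ
    have hperm : ElemReg I (t ++ [x]) := h.perm (List.perm_append_singleton x t).symm hm
    have hmapmem : ∀ y ∈ t ++ [x], y ∈ IsLocalRing.maximalIdeal S := by
      intro y hy
      rcases List.mem_append.mp hy with hy | hy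
      · exact htm y hy
      · rw [List.mem_singleton.mp hy]; exact hxm
    have hmap : ElemReg I ((t ++ [x]).map (· ^ A)) := ElemReg.map_pow (t ++ [x]) I hperm hmapmem (by omega)
    have hxA : NZD J (x ^ A) := by
      have h' : ElemReg I (t.map (· ^ A) ++ [x ^ A]) := by
        rw [List.map_append] at hmap
        simpa using hmap
      exact ElemReg.nzd_last _ I _ h'
    have hx : NZD J x := hxA.of_pow (by omega)
    have hr' : x ^ B * (r * (t.map (· ^ B)).prod) ∈ J ⊔ Ideal.span {x ^ A} := by
      simp only [List.map_cons, List.prod_cons, Ideal.ofList_cons] at hr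
      rw [← sup_assoc, sup_right_comm] at hr
      have heq : x ^ B * (r * (List.map (fun x => x ^ B) t).prod) =
          r * (x ^ B * (List.map (fun x => x ^ B) t).prod) := by ring
      rw [heq]
      exact hr
    have h2 := colon_pow hx B (le_of_lt hBA) hr'
    have h2' : r * (t.map (· ^ B)).prod ∈
        (I ⊔ Ideal.span {x ^ (A - B)}) ⊔ Ideal.ofList (t.map (· ^ A)) := by
      rw [hJ, sup_right_comm] at h2
      exact h2
    have h3 : ElemReg I (t ++ [x ^ (A - B)]) := hperm.pow_last t I x (A - B)
    have h4 : ElemReg I (x ^ (A - B) :: t) := by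
      refine h3.perm (List.perm_append_singleton _ t) ?_
      intro y hy
      rcases List.mem_append.mp hy with hy | hy
      · exact htm y hy
      · rw [List.mem_singleton.mp hy]
        exact Ideal.pow_mem_of_mem _ hxm _ (by omega)
    have h6 := main_local t _ h4.2 htm hBA h2'
    rw [List.map_cons, Ideal.ofList_cons, ← sup_assoc]
    exact h6

end Local2
end Aux


section Global

open RingTheory.Sequence
open scoped TensorProduct

variable {R : Type} [CommRing R] [IsNoetherianRing R]

lemma list_map_pow_comm {S' : Type} [CommRing S'] (φ : R →+* S') (l : List R) (n : ℕ) :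
    (l.map (· ^ n)).map φ = (l.map φ).map (· ^ n) := by
  rw [List.map_map, List.map_map]
  congr 1
  funext y
  exact map_pow φ y n

lemma main_global (l : List R) (hwr : IsWeaklyRegular R l) {A B : ℕ} (hBA : B < A)
    {r : R} (hr : r * (l.map (· ^ B)).prod ∈ Ideal.ofList (l.map (· ^ A))) :
    r ∈ Ideal.ofList (l.map (· ^ (A - B))) := by
  apply Submodule.mem_of_localization_maximal (fun P _ => Localization.AtPrime P)
      (fun P _ => Algebra.linearMap R (Localization.AtPrime P))
  intro P hP
  haveI := hP.isPrime
  set SP := Localization.AtPrime P with hSP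
  let φ : R →+* SP := algebraMap R SP
  -- rewrite the goal as a span membership
  rw [← Submodule.restrictScalars_localized' SP]
  show φ r ∈ (Submodule.localized' SP P.primeCompl (Algebra.linearMap R SP) _ : Submodule SP SP)
  erw [Submodule.localized'_span]
  have himg : ∀ n : ℕ, (Algebra.linearMap R SP) '' {y | y ∈ l.map (· ^ n)} =
      {y | y ∈ (l.map φ).map (· ^ n)} := by
    intro n
    ext y
    simp only [Set.mem_image, Set.mem_setOf_eq, ← list_map_pow_comm φ l n, List.mem_map]
    rfl
  rw [himg]
  by_cases hcase : ∀ x ∈ l, x ∈ P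
  · -- all elements in P : use the local theorem
    haveI : IsNoetherianRing SP :=
      IsLocalization.isNoetherianRing P.primeCompl SP inferInstance
    have hw1 : IsWeaklyRegular (SP ⊗[R] R) l := hwr.isWeaklyRegular_lTensor
    have hw2 : IsWeaklyRegular SP l := ((TensorProduct.rid R SP).isWeaklyRegular_congr l).mp hw1
    have hw3 : IsWeaklyRegular SP (l.map φ) := by
      rw [show φ = algebraMap R SP from rfl, isWeaklyRegular_map_algebraMap_iff]
      exact hw2
    have hw4 : IsWeaklyRegular (SP ⧸ (⊥ : Ideal SP)) (l.map φ) :=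
      (((⊥ : Ideal SP).quotEquivOfEqBot rfl).isWeaklyRegular_congr (l.map φ)).mpr hw3
    have her : ElemReg (⊥ : Ideal SP) (l.map φ) := (bridge _ _).mp hw4
    have hmm : ∀ y ∈ l.map φ, y ∈ IsLocalRing.maximalIdeal SP := by
      intro y hy
      obtain ⟨x, hx, rfl⟩ := List.mem_map.mp hy
      rw [IsLocalRing.mem_maximalIdeal, mem_nonunits_iff,
        IsLocalization.AtPrime.isUnit_to_map_iff SP P x]
      exact fun hc => hc (hcase x hx)
    have hmem : φ r * ((l.map φ).map (· ^ B)).prod ∈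
        (⊥ : Ideal SP) ⊔ Ideal.ofList ((l.map φ).map (· ^ A)) := by
      rw [bot_sup_eq, ← list_map_pow_comm φ l A, ← Ideal.map_ofList,
        ← list_map_pow_comm φ l B, ← map_list_prod φ, ← map_mul]
      exact Ideal.mem_map_of_mem φ hr
    have := main_local (l.map φ) ⊥ her hmm hBA hmem
    rwa [bot_sup_eq] at this
  · -- some element is invertible: the ideal is the unit ideal
    push_neg at hcase
    obtain ⟨x, hxl, hxP⟩ := hcase
    have hu : IsUnit (φ x) := (IsLocalization.AtPrime.isUnit_to_map_iff SP P x).mpr hxP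
    have hmem : (φ x) ^ (A - B) ∈ {y | y ∈ (l.map φ).map (· ^ (A - B))} := by
      simp only [Set.mem_setOf_eq, List.mem_map]
      exact ⟨φ x, ⟨x, hxl, rfl⟩, rfl⟩
    have : Ideal.span {y | y ∈ (l.map φ).map (· ^ (A - B))} = ⊤ :=
      Ideal.eq_top_of_isUnit_mem _ (Ideal.subset_span hmem) (hu.pow (A - B))
    exact this.ge Submodule.mem_top

end Global


/-- The ideal `(f 0 ^ a, …, f (c-1) ^ a)` of `a`-th powers of a sequence. -/
def fpow {R : Type} [CommRing R] {c : ℕ} (f : Fin c → R) (a : ℕ) : Ideal R :=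
  Ideal.span (Set.range fun i => f i ^ a)

/-- A Noetherian local ring is *regular* if its maximal ideal can be generated by
`dim` many elements. -/
def IsRegularLocal (A : Type) [CommRing A] [IsLocalRing A] : Prop :=
  IsNoetherianRing A ∧
    ∃ s : Finset A, Ideal.span (s : Set A) = IsLocalRing.maximalIdeal A ∧
      (s.card : WithBot (WithTop ℕ)) = ringKrullDim A

/-- A commutative ring is *regular* if it is Noetherian and all its localizations at
primes are regular local rings. -/
def IsRegularRingOld (R : Type) [CommRing R] : Prop :=
  IsNoetherianRing R ∧
    ∀ (P : Ideal R) [P.IsPrime], IsRegularLocal (Localization.AtPrime P)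

section Final

variable {R : Type} [CommRing R]

lemma ofList_map_pow_eq_fpow {c : ℕ} (f : Fin c → R) (a : ℕ) :
    Ideal.ofList ((List.ofFn f).map (· ^ a)) = fpow f a := by
  show Ideal.span _ = Ideal.span _
  congr 1
  ext y
  simp only [Set.mem_setOf_eq, List.mem_map, List.mem_ofFn, Set.mem_range]
  constructor
  · rintro ⟨z, ⟨i, rfl⟩, rfl⟩; exact ⟨i, rfl⟩
  · rintro ⟨i, rfl⟩; exact ⟨f i, ⟨i, rfl⟩, rfl⟩

lemma prod_map_pow {c : ℕ} (f : Fin c → R) (B : ℕ) :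
    ((List.ofFn f).map (· ^ B)).prod = (∏ k, f k) ^ B := by
  rw [List.map_ofFn, List.prod_ofFn, ← Finset.prod_pow]
  rfl

end Final

theorem statement18 (R : Type) [CommRing R]
    (p : ℕ) [Fact p.Prime] [CharP R p]
    (hreg : IsRegularRingOld R)
    (c : ℕ) (hc : 1 ≤ c) (f : Fin c → R)
    (hrs : RingTheory.Sequence.IsRegular R (List.ofFn f))
    (φ : ∀ i j : ℕ, i ≤ j → (R ⧸ fpow f (i + 1)) →ₗ[R] (R ⧸ fpow f (j + 1)))
    (hφ : ∀ (i j : ℕ) (hij : i ≤ j) (r : R),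
      φ i j hij (Ideal.Quotient.mk _ r) = Ideal.Quotient.mk _ ((∏ k, f k) ^ (j - i) * r)) :
    (∀ e : ℕ, (fpow f (p ^ e + p)).colon (Ideal.span {(∏ k, f k) ^ (p - 1)})
        = fpow f (p ^ e + 1))
    ∧ ∀ θ : Module.DirectLimit (fun a => R ⧸ fpow f (a + 1)) φ →ₗ[R]
          Module.DirectLimit (fun a => R ⧸ fpow f (a + 1)) φ,
        (∀ (e : ℕ) (r : R),
          θ (Module.DirectLimit.of R ℕ (fun a => R ⧸ fpow f (a + 1)) φ (p ^ e + p - 1)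
              (Ideal.Quotient.mk _ r))
            = Module.DirectLimit.of R ℕ (fun a => R ⧸ fpow f (a + 1)) φ (p ^ e)
                (Ideal.Quotient.mk _ r)) →
        ∀ x : Module.DirectLimit (fun a => R ⧸ fpow f (a + 1)) φ,
          θ x = 0 ↔ (∏ k, f k) ^ (p - 1) • x = 0 := by
  have hp : p.Prime := Fact.out
  have hp1 : 1 ≤ p := hp.pos
  haveI : IsNoetherianRing R := hreg.1
  set F := ∏ k, f k with hF
  constructor
  · -- Part 1 : the colon identity
    intro e
    set q := p ^ e with hq
    have hq1 : 1 ≤ q := Nat.one_le_pow _ _ hp.pos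
    apply le_antisymm
    · -- (𝐟^{[q+p]} : F^{p-1}) ≤ 𝐟^{[q+1]}
      intro r hr
      rw [Ideal.mem_colon_span_singleton] at hr
      have hmem : r * ((List.ofFn f).map (· ^ (p - 1))).prod ∈
          Ideal.ofList ((List.ofFn f).map (· ^ (q + p))) := by
        rw [ofList_map_pow_eq_fpow, prod_map_pow, ← hF]
        exact hr
      have := main_global (List.ofFn f) hrs.toIsWeaklyRegular
        (show p - 1 < q + p by omega) hmem
      rwa [ofList_map_pow_eq_fpow, show q + p - (p - 1) = q + 1 by omega] at this
    · -- 𝐟^{[q+1]} ≤ (𝐟^{[q+p]} : F^{p-1})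
      rw [fpow, Ideal.span_le]
      rintro _ ⟨i, rfl⟩
      rw [SetLike.mem_coe, Ideal.mem_colon_span_singleton]
      have key : f i ^ (q + 1) * F ^ (p - 1)
          = (∏ k ∈ Finset.univ.erase i, f k ^ (p - 1)) * f i ^ (q + p) := by
        calc f i ^ (q + 1) * F ^ (p - 1)
            = f i ^ (q + 1) * (f i ^ (p - 1) * ∏ k ∈ Finset.univ.erase i, f k ^ (p - 1)) := by
              rw [hF, ← Finset.prod_pow,
                ← Finset.mul_prod_erase Finset.univ _ (Finset.mem_univ i)]
          _ = (∏ k ∈ Finset.univ.erase i, f k ^ (p - 1)) * (f i ^ (q + 1) * f i ^ (p - 1)) := by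
              ring
          _ = (∏ k ∈ Finset.univ.erase i, f k ^ (p - 1)) * f i ^ (q + p) := by
              rw [← pow_add, show q + 1 + (p - 1) = q + p by omega]
      rw [key]
      exact Ideal.mul_mem_left _ _ (Ideal.subset_span ⟨i, rfl⟩)
  · -- Part 2 : the kernel of θ
    intro θ hθ x
    haveI ds : DirectedSystem (fun a => R ⧸ fpow f (a + 1)) (fun i j h => φ i j h) := by
      constructor
      · intro i y
        obtain ⟨r, rfl⟩ := Ideal.Quotient.mk_surjective y
        rw [hφ]
        simp
      · intro k j i hij hjk y
        obtain ⟨r, rfl⟩ := Ideal.Quotient.mk_surjective y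
        rw [hφ, hφ, hφ, ← mul_assoc, ← pow_add, show k - j + (j - i) = k - i by omega]
    have hFF : ∀ (u v : ℕ) (s : R), (F : R) ^ u * (F ^ v * s) = F ^ (u + v) * s := by
      intro u v s
      rw [← mul_assoc, ← pow_add]
    have hsmul : ∀ (a : ℕ) (n : ℕ) (s : R),
        (F ^ n : R) • (Ideal.Quotient.mk (fpow f (a + 1)) s)
          = Ideal.Quotient.mk (fpow f (a + 1)) (F ^ n * s) := by
      intro a n s
      rw [Algebra.smul_def, Ideal.Quotient.algebraMap_eq, ← map_mul]
    obtain ⟨i0, y, rfl⟩ := Module.DirectLimit.exists_of x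
    obtain ⟨r0, rfl⟩ := Ideal.Quotient.mk_surjective y
    have hle : i0 ≤ p ^ i0 + p - 1 := by
      have := Nat.lt_pow_self hp.one_lt (n := i0)
      omega
    set N := p ^ i0 + p - 1 with hN
    set r' := F ^ (N - i0) * r0 with hr'
    have hx : Module.DirectLimit.of R ℕ (fun a => R ⧸ fpow f (a + 1)) φ i0
          (Ideal.Quotient.mk _ r0)
        = Module.DirectLimit.of R ℕ (fun a => R ⧸ fpow f (a + 1)) φ N
          (Ideal.Quotient.mk _ r') := by
      rw [← Module.DirectLimit.of_f (hij := hle), hφ]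
    have hθx : θ (Module.DirectLimit.of R ℕ (fun a => R ⧸ fpow f (a + 1)) φ i0
          (Ideal.Quotient.mk _ r0))
        = Module.DirectLimit.of R ℕ (fun a => R ⧸ fpow f (a + 1)) φ (p ^ i0)
          (Ideal.Quotient.mk _ r') := by
      rw [hx, hN]
      exact hθ i0 r'
    constructor
    · intro h0
      rw [hθx] at h0
      obtain ⟨j, hij, hz⟩ := Module.DirectLimit.of.zero_exact h0
      rw [hφ] at hz
      set j' := max j N with hj'
      have h1 : N ≤ j' := le_max_right _ _
      have h2 : j ≤ j' := le_max_left _ _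
      have hpe : p ^ i0 ≤ j := hij
      have hz' : Ideal.Quotient.mk (fpow f (j' + 1)) (F ^ (j' - p ^ i0) * r') = 0 := by
        have := congrArg (φ j j' h2) hz
        rw [map_zero, hφ, hFF, show j' - j + (j - p ^ i0) = j' - p ^ i0 by omega] at this
        exact this
      rw [hx, ← LinearMap.map_smul, hsmul, ← Module.DirectLimit.of_f (hij := h1), hφ, hFF,
        show j' - N + (p - 1) = j' - p ^ i0 by omega, hz', map_zero]
    · intro h0
      rw [hx, ← LinearMap.map_smul, hsmul] at h0
      obtain ⟨j, hNj, hz⟩ := Module.DirectLimit.of.zero_exact h0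
      rw [hφ, hFF, show j - N + (p - 1) = j - p ^ i0 by omega] at hz
      rw [hθx, ← Module.DirectLimit.of_f (hij := show p ^ i0 ≤ j by omega), hφ, hz, map_zero]
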